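/- arXiv:1610.00565 — 11 statements merged into one kernel-verified Lean document; each statement's English description precedes it below -/
import Mathlib

section
/- Let $I$ be an ideal of $R$, $N$ a 2-absorbing secondary submodule of an $R$-module $M$, $a \in R$, and $L$ a completely irreducible submodule of $M$. If $IaN \subseteq L$, then $a\,\mathrm{sec}(N) \subseteq L$ or $I\,\mathrm{sec}(N) \subseteq L$ or $Ia \subseteq \mathrm{Ann}_R(N)$. -/
open Pointwise

variable {R : Type*} [CommRing R] {M : Type*} [AddCommGroup M] [Module R M]

/-- A nonzero submodule `S` is second if every ring element acts on it
surjectively (`a • S = S`) or as zero (`a • S = ⊥`). -/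
def IsSecond (S : Submodule R M) : Prop :=
  S ≠ ⊥ ∧ ∀ a : R, a • S = S ∨ a • S = ⊥

/-- The second radical of `N`: the sum of all second submodules contained in `N`. -/
def secRad (N : Submodule R M) : Submodule R M :=
  sSup {S : Submodule R M | IsSecond S ∧ S ≤ N}

/-- A proper submodule `L` is completely irreducible if whenever `L` is an
intersection of a family of submodules, it equals one of them. -/
def CompletelyIrreducible (L : Submodule R M) : Prop :=
  L ≠ ⊤ ∧ ∀ s : Set (Submodule R M), L = sInf s → L ∈ s

/-- 2-absorbing secondary submodule. -/
def Is2AbsSecondary (N : Submodule R M) : Prop :=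
  N ≠ ⊥ ∧ ∀ a b : R, ∀ L : Submodule R M, CompletelyIrreducible L →
    (a * b) • N ≤ L →
    a • secRad N ≤ L ∨ b • secRad N ≤ L ∨ (a * b) • N = ⊥

/-- Strongly 2-absorbing secondary submodule. -/
def IsS2AbsSecondary (N : Submodule R M) : Prop :=
  N ≠ ⊥ ∧ ∀ a b : R, ∀ K : Submodule R M,
    (a * b) • N ≤ K →
    a • secRad N ≤ K ∨ b • secRad N ≤ K ∨ (a * b) • N = ⊥

/-- Strongly 2-absorbing second submodule. -/
def IsS2AbsSecond (N : Submodule R M) : Prop :=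
  N ≠ ⊥ ∧ ∀ a b : R, ∀ K : Submodule R M,
    (a * b) • N ≤ K →
    a • N ≤ K ∨ b • N ≤ K ∨ (a * b) • N = ⊥

/-- A 2-absorbing primary ideal. -/
def Is2AbsPrimaryIdeal (I : Ideal R) : Prop :=
  I ≠ ⊤ ∧ ∀ a b c : R, a * b * c ∈ I →
    a * b ∈ I ∨ a * c ∈ I.radical ∨ b * c ∈ I.radical

/-- A comultiplication module: every submodule equals `(0 :_M Ann(N))`. -/
def IsComultiplication (R M : Type*) [CommRing R] [AddCommGroup M] [Module R M] : Prop :=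
  ∀ N : Submodule R M, ∀ m : M, m ∈ N ↔ ∀ r ∈ N.annihilator, r • m = 0

/-- A secondary submodule: each `r : R` satisfies `r • N = N` or `r ^ t • N = ⊥`. -/
def IsSecondarySubmodule (N : Submodule R M) : Prop :=
  N ≠ ⊥ ∧ ∀ r : R, r • N = N ∨ ∃ t : ℕ, 0 < t ∧ r ^ t • N = ⊥

theorem stmt0 (I : Ideal R) (N : Submodule R M) (hN : Is2AbsSecondary N)
    (a : R) (L : Submodule R M) (hL : CompletelyIrreducible L)
    (h : a • (I • N) ≤ L) :
    a • secRad N ≤ L ∨ I • secRad N ≤ L ∨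
      I * Ideal.span {a} ≤ Submodule.annihilator N := by
  have hle : ∀ (r : R) (K L' : Submodule R M), (r • K ≤ L') ↔ ∀ x ∈ K, r • x ∈ L' := by
    intro r K L'
    constructor
    · intro hh x hx
      exact hh (Submodule.smul_mem_pointwise_smul x r K hx)
    · intro hh y hy
      obtain ⟨x, hx, rfl⟩ := Set.mem_smul_set.mp hy
      exact hh x hx
  have key : ∀ c ∈ I, (a * c) • N ≤ L := by
    intro c hc
    rw [hle]
    intro x hx
    rw [mul_smul]
    exact h (Submodule.smul_mem_pointwise_smul _ a _ (Submodule.smul_mem_smul hc hx))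
  by_cases h1 : a • secRad N ≤ L
  · exact Or.inl h1
  by_cases h2 : ∀ b ∈ I, b • secRad N ≤ L
  · refine Or.inr (Or.inl ?_)
    rw [Submodule.smul_le]
    intro r hr n hn
    exact h2 r hr (Submodule.smul_mem_pointwise_smul n r _ hn)
  push_neg at h2
  obtain ⟨b, hbI, hb⟩ := h2
  have hab : (a * b) • N = ⊥ := by
    rcases hN.2 a b L hL (key b hbI) with h' | h' | h'
    · exact absurd h' h1
    · exact absurd h' hb
    · exact h'
  refine Or.inr (Or.inr ?_)
  have habc : ∀ c ∈ I, (a * c) • N = ⊥ := by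
    intro c hc
    by_cases hcs : c • secRad N ≤ L
    · rcases hN.2 a (b + c) L hL (key (b + c) (I.add_mem hbI hc)) with h' | h' | h'
      · exact absurd h' h1
      · exfalso
        apply hb
        rw [hle] at h' ⊢
        intro x hx
        have := h' x hx
        have h2 : c • x ∈ L := (hle c _ L).mp hcs x hx
        have : (b + c) • x - c • x ∈ L := L.sub_mem this h2
        rwa [add_smul, add_sub_cancel_right] at this
      · rw [eq_bot_iff, hle] at h' ⊢
        intro x hx
        have h3 : (a * b) • x ∈ (⊥ : Submodule R M) := by
          rw [← hab]; exact Submodule.smul_mem_pointwise_smul x _ N hx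
        have h4 := h' x hx
        rw [Submodule.mem_bot] at h3 h4 ⊢
        have : (a * (b + c)) • x - (a * b) • x = (a * c) • x := by
          rw [mul_add, add_smul, add_sub_cancel_left]
        rw [← this, h3, h4, sub_zero]
    · rcases hN.2 a c L hL (key c hc) with h' | h' | h'
      · exact absurd h' h1
      · exact absurd h' hcs
      · exact h'
  rw [Ideal.mul_le]
  intro c hc x hx
  obtain ⟨r, rfl⟩ := Ideal.mem_span_singleton'.mp hx
  rw [Submodule.mem_annihilator]
  intro n hn
  have : (a * c) • n ∈ (⊥ : Submodule R M) := by
    rw [← habc c hc]; exact Submodule.smul_mem_pointwise_smul n _ N hn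
  rw [Submodule.mem_bot] at this
  calc (c * (r * a)) • n = r • ((a * c) • n) := by rw [smul_smul, show r * (a * c) = c * (r * a) by ring]
    _ = 0 := by rw [this, smul_zero]
end

section
/- Let $I, J$ be ideals of $R$, $N$ a 2-absorbing secondary submodule of an $R$-module $M$, and $L$ a completely irreducible submodule of $M$. If $IJN \subseteq L$, then $I\,\mathrm{sec}(N) \subseteq L$ or $J\,\mathrm{sec}(N) \subseteq L$ or $IJ \subseteq \mathrm{Ann}_R(N)$. -/
open Pointwise

variable {R : Type*} [CommRing R] {M : Type*} [AddCommGroup M] [Module R M]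

theorem stmt1 (I J : Ideal R) (N : Submodule R M) (hN : Is2AbsSecondary N)
    (L : Submodule R M) (hL : CompletelyIrreducible L)
    (h : I • (J • N) ≤ L) :
    I • secRad N ≤ L ∨ J • secRad N ≤ L ∨ I * J ≤ Submodule.annihilator N := by
  classical
  -- pointwise smul of a submodule: containment criterion
  have smul_le_iff : ∀ (r : R) (K : Submodule R M), r • K ≤ L ↔ ∀ x ∈ K, r • x ∈ L := by
    intro r K
    constructor
    · intro hK x hx
      exact hK (Submodule.smul_mem_pointwise_smul x r K hx)
    · intro hK m hm
      obtain ⟨x, hx, rfl⟩ := Set.mem_smul_set.mp hm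
      exact hK x hx
  set A : R → Prop := fun r => r • secRad N ≤ L with hA
  have hAadd : ∀ x y, A x → A y → A (x + y) := by
    intro x y hx hy
    rw [hA]
    rw [hA] at hx hy
    rw [smul_le_iff] at hx hy ⊢
    intro m hm
    rw [add_smul]
    exact L.add_mem (hx m hm) (hy m hm)
  have hAsub : ∀ x y, A (x + y) → A y → A x := by
    intro x y hxy hy
    rw [hA] at hxy hy ⊢
    rw [smul_le_iff] at hxy hy ⊢
    intro m hm
    have : x • m = (x + y) • m - y • m := by rw [add_smul]; abel
    rw [this]
    exact L.sub_mem (hxy m hm) (hy m hm)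
  -- The core element-wise hypothesis
  have hcore : ∀ a ∈ I, ∀ b ∈ J, A a ∨ A b ∨ a * b ∈ Submodule.annihilator N := by
    intro a ha b hb
    have habN : (a * b) • N ≤ L := by
      rw [smul_le_iff]
      intro x hx
      have : (a * b) • x = a • (b • x) := by rw [smul_smul]
      rw [this]
      exact h (Submodule.smul_mem_smul ha (Submodule.smul_mem_smul hb hx))
    rcases hN.2 a b L hL habN with h1 | h2 | h3
    · exact Or.inl h1
    · exact Or.inr (Or.inl h2)
    · refine Or.inr (Or.inr (Submodule.mem_annihilator.mpr fun n hn => ?_))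
      have : (a * b) • n ∈ (a * b) • N := Submodule.smul_mem_pointwise_smul n _ N hn
      rw [h3] at this
      exact this
  by_cases hI : I • secRad N ≤ L
  · exact Or.inl hI
  by_cases hJ : J • secRad N ≤ L
  · exact Or.inr (Or.inl hJ)
  right; right
  -- extract witnesses a₀ ∈ I, b₀ ∈ J with ¬ A a₀, ¬ A b₀
  have hIw : ∃ a₀ ∈ I, ¬ A a₀ := by
    by_contra hcon
    push_neg at hcon
    apply hI
    rw [Submodule.smul_le]
    intro r hr x hx
    have := hcon r hr
    rw [hA, smul_le_iff] at this
    exact this x hx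
  have hJw : ∃ b₀ ∈ J, ¬ A b₀ := by
    by_contra hcon
    push_neg at hcon
    apply hJ
    rw [Submodule.smul_le]
    intro r hr x hx
    have := hcon r hr
    rw [hA, smul_le_iff] at this
    exact this x hx
  obtain ⟨a₀, ha₀I, ha₀⟩ := hIw
  obtain ⟨b₀, hb₀J, hb₀⟩ := hJw
  rw [Submodule.mul_le]
  intro a ha b hb
  have key : ∀ x ∈ I, ∀ y ∈ J, ¬ A x → ¬ A y → x * y ∈ Submodule.annihilator N := by
    intro x hx y hy hnx hny
    rcases hcore x hx y hy with h1 | h2 | h3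
    · exact absurd h1 hnx
    · exact absurd h2 hny
    · exact h3
  by_cases haA : A a
  · by_cases hbA : A b
    · -- both in A: use a+a₀, b+b₀
      have hna : ¬ A (a + a₀) := fun hc => ha₀ (hAsub a₀ a (by rwa [add_comm]) haA)
      have hnb : ¬ A (b + b₀) := fun hc => hb₀ (hAsub b₀ b (by rwa [add_comm]) hbA)
      have h1 := key (a + a₀) (I.add_mem ha ha₀I) (b + b₀) (J.add_mem hb hb₀J) hna hnb
      have h2 := key (a + a₀) (I.add_mem ha ha₀I) b₀ hb₀J hna hb₀
      have h3 := key a₀ ha₀I (b + b₀) (J.add_mem hb hb₀J) ha₀ hnb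
      have h4 := key a₀ ha₀I b₀ hb₀J ha₀ hb₀
      have heq : a * b = (a + a₀) * (b + b₀) - (a + a₀) * b₀ - a₀ * (b + b₀) + a₀ * b₀ := by
        ring
      rw [heq]
      exact Submodule.add_mem _ (Submodule.sub_mem _ (Submodule.sub_mem _ h1 h2) h3) h4
    · -- a ∈ A, b ∉ A: use a+a₀
      have hna : ¬ A (a + a₀) := fun hc => ha₀ (hAsub a₀ a (by rwa [add_comm]) haA)
      have h1 := key (a + a₀) (I.add_mem ha ha₀I) b hb hna hbA
      have h2 := key a₀ ha₀I b hb ha₀ hbA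
      have heq : a * b = (a + a₀) * b - a₀ * b := by ring
      rw [heq]
      exact Submodule.sub_mem _ h1 h2
  · by_cases hbA : A b
    · have hnb : ¬ A (b + b₀) := fun hc => hb₀ (hAsub b₀ b (by rwa [add_comm]) hbA)
      have h1 := key a ha (b + b₀) (J.add_mem hb hb₀J) haA hnb
      have h2 := key a ha b₀ hb₀J haA hb₀
      have heq : a * b = a * (b + b₀) - a * b₀ := by ring
      rw [heq]
      exact Submodule.sub_mem _ h1 h2
    · exact key a ha b hb haA hbA
end

section
/- Let $N$ be a nonzero submodule of an $R$-module $M$. Then the following are equivalent: (a) whenever $abN \subseteq L_1 \cap L_2$ for $a,b \in R$ and completely irreducible submodules $L_1, L_2$ of $M$, then $a\,\mathrm{sec}(N) \subseteq L_1 \cap L_2$ or $b\,\mathrm{sec}(N) \subseteq L_1 \cap L_2$ or $abN = 0$; (b) whenever $IJN \subseteq K$ for ideals $I,J$ of $R$ and a submodule $K$ of $M$, then $I\,\mathrm{sec}(N) \subseteq K$ or $J\,\mathrm{sec}(N) \subseteq K$ or $IJN = 0$; (c) for each $a,b \in R$, $a\,\mathrm{sec}(N) \subseteq abN$ or $b\,\mathrm{sec}(N)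 \subseteq abN$ or $abN = 0$. -/
open Pointwise

variable {R : Type*} [CommRing R] {M : Type*} [AddCommGroup M] [Module R M]

-- Auxiliary lemmas

private lemma mem_smul_iff' (a : R) (S : Submodule R M) (x : M) :
    x ∈ a • S ↔ ∃ s ∈ S, a • s = x := Submodule.mem_map

private lemma smul_le_iff' (a : R) (S K : Submodule R M) :
    a • S ≤ K ↔ ∀ s ∈ S, a • s ∈ K := by
  constructor
  · intro h s hs
    exact h (Submodule.smul_mem_pointwise_smul s a S hs)
  · intro h x hx
    obtain ⟨s, hs, rfl⟩ := (mem_smul_iff' a S x).mp hx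
    exact h s hs

private lemma smul_eq_bot_iff' (a : R) (S : Submodule R M) :
    a • S = ⊥ ↔ ∀ s ∈ S, a • s = 0 := by
  rw [eq_bot_iff, smul_le_iff']
  simp [Submodule.mem_bot]

/-- Every submodule avoiding a point extends to a completely irreducible one. -/
private lemma exists_completelyIrreducible (K : Submodule R M) (x : M) (hx : x ∉ K) :
    ∃ L : Submodule R M, CompletelyIrreducible L ∧ K ≤ L ∧ x ∉ L := by
  set S : Set (Submodule R M) := {P | x ∉ P} with hS
  have hzorn : ∀ c ⊆ S, IsChain (· ≤ ·) c → ∀ y ∈ c, ∃ ub ∈ S, ∀ z ∈ c, z ≤ ub := by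
    intro c hcS hc y hy
    refine ⟨sSup c, ?_, fun z hz => le_sSup hz⟩
    intro hxc
    obtain ⟨p, hp, hxp⟩ := (Submodule.mem_sSup_of_directed ⟨y, hy⟩ hc.directedOn).mp hxc
    exact hcS hp hxp
  obtain ⟨L, hKL, hLS, hLmax⟩ := zorn_le_nonempty₀ S hzorn K hx
  refine ⟨L, ⟨?_, ?_⟩, hKL, hLS⟩
  · intro h; exact hLS (h ▸ Submodule.mem_top)
  · intro s hs
    by_contra hLs
    apply hLS
    have : ∀ W ∈ s, x ∈ W := by
      intro W hW
      have hLW : L ≤ W := hs ▸ sInf_le hW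
      by_contra hxW
      exact hLs (by rw [le_antisymm hLW (hLmax hxW hLW)]; exact hW)
    rw [hs]
    exact Submodule.mem_sInf.mpr this

private lemma not_ideal_smul_le (I : Ideal R) (S K : Submodule R M)
    (h : ¬ I • S ≤ K) : ∃ a ∈ I, ¬ a • S ≤ K := by
  by_contra hcon
  push_neg at hcon
  exact h (Submodule.smul_le.mpr fun r hr s hs =>
    (smul_le_iff' r S K).mp (hcon r hr) s hs)

private lemma c_implies_b (N : Submodule R M)
    (hc : ∀ a b : R,
      a • secRad N ≤ (a * b) • N ∨ b • secRad N ≤ (a * b) • N ∨ (a * b) • N = ⊥) :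
    ∀ (I J : Ideal R) (K : Submodule R M), I • (J • N) ≤ K →
      I • secRad N ≤ K ∨ J • secRad N ≤ K ∨ I • (J • N) = ⊥ := by
  intro I J K hIJK
  by_cases hI : I • secRad N ≤ K
  · exact Or.inl hI
  by_cases hJ : J • secRad N ≤ K
  · exact Or.inr (Or.inl hJ)
  right; right
  obtain ⟨a₀, ha₀I, ha₀⟩ := not_ideal_smul_le I (secRad N) K hI
  obtain ⟨b₀, hb₀J, hb₀⟩ := not_ideal_smul_le J (secRad N) K hJ
  -- for a ∈ I, b ∈ J, (a*b) • N ≤ K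
  have hle : ∀ a ∈ I, ∀ b ∈ J, (a * b) • N ≤ K := by
    intro a ha b hb
    rw [smul_le_iff']
    intro n hn
    rw [mul_smul]
    exact hIJK (Submodule.smul_mem_smul ha
      (Submodule.smul_mem_smul hb hn))
  -- core case: both scalars don't send secRad into K
  have core : ∀ a ∈ I, ∀ b ∈ J, ¬ a • secRad N ≤ K → ¬ b • secRad N ≤ K →
      (a * b) • N = ⊥ := by
    intro a ha b hb hna hnb
    rcases hc a b with h | h | h
    · exact absurd (h.trans (hle a ha b hb)) hna
    · exact absurd (h.trans (hle a ha b hb)) hnb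
    · exact h
  -- step 2: b with ¬ b • secRad ≤ K, a arbitrary in I
  have step2 : ∀ a ∈ I, ∀ b ∈ J, ¬ b • secRad N ≤ K → (a * b) • N = ⊥ := by
    intro a ha b hb hnb
    by_cases hna : a • secRad N ≤ K
    · have hsum : ¬ (a + a₀) • secRad N ≤ K := by
        intro h
        apply ha₀
        rw [smul_le_iff']
        intro s hs
        have h1 : (a + a₀) • s ∈ K := (smul_le_iff' _ _ _).mp h s hs
        have h2 : a • s ∈ K := (smul_le_iff' _ _ _).mp hna s hs
        have : a₀ • s = (a + a₀) • s - a • s := by rw [add_smul]; abel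
        rw [this]
        exact K.sub_mem h1 h2
      have e1 : ((a + a₀) * b) • N = ⊥ :=
        core _ (I.add_mem ha ha₀I) b hb hsum hnb
      have e2 : (a₀ * b) • N = ⊥ := core _ ha₀I b hb ha₀ hnb
      rw [smul_eq_bot_iff'] at e1 e2 ⊢
      intro n hn
      have : (a * b) • n = ((a + a₀) * b) • n - (a₀ * b) • n := by
        rw [add_mul, add_smul]; abel
      rw [this, e1 n hn, e2 n hn, sub_zero]
    · exact core a ha b hb hna hnb
  -- all pairs vanish
  have allbot : ∀ a ∈ I, ∀ b ∈ J, (a * b) • N = ⊥ := by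
    intro a ha b hb
    by_cases hnb : b • secRad N ≤ K
    · have hsum : ¬ (b + b₀) • secRad N ≤ K := by
        intro h
        apply hb₀
        rw [smul_le_iff']
        intro s hs
        have h1 : (b + b₀) • s ∈ K := (smul_le_iff' _ _ _).mp h s hs
        have h2 : b • s ∈ K := (smul_le_iff' _ _ _).mp hnb s hs
        have : b₀ • s = (b + b₀) • s - b • s := by rw [add_smul]; abel
        rw [this]
        exact K.sub_mem h1 h2
      have e1 : (a * (b + b₀)) • N = ⊥ :=
        step2 a ha _ (J.add_mem hb hb₀J) hsum
      have e2 : (a * b₀) • N = ⊥ := step2 a ha b₀ hb₀J hb₀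
      rw [smul_eq_bot_iff'] at e1 e2 ⊢
      intro n hn
      have : (a * b) • n = (a * (b + b₀)) • n - (a * b₀) • n := by
        rw [mul_add, add_smul]; abel
      rw [this, e1 n hn, e2 n hn, sub_zero]
    · exact step2 a ha b hb hnb
  rw [eq_bot_iff]
  refine Submodule.smul_le.mpr fun r hr m hm => ?_
  refine Submodule.smul_induction_on hm ?_ ?_
  · intro b hb n hn
    have := (smul_eq_bot_iff' _ _).mp (allbot r hr b hb) n hn
    rw [mul_smul] at this
    simpa [Submodule.mem_bot] using this
  · intro x y hx hy
    simp only [Submodule.mem_bot] at hx hy ⊢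
    rw [smul_add, hx, hy, add_zero]

private lemma b_implies_a (N : Submodule R M)
    (hb : ∀ (I J : Ideal R) (K : Submodule R M), I • (J • N) ≤ K →
      I • secRad N ≤ K ∨ J • secRad N ≤ K ∨ I • (J • N) = ⊥) :
    ∀ (a b : R) (L₁ L₂ : Submodule R M),
      CompletelyIrreducible L₁ → CompletelyIrreducible L₂ →
      (a * b) • N ≤ L₁ ⊓ L₂ →
      a • secRad N ≤ L₁ ⊓ L₂ ∨ b • secRad N ≤ L₁ ⊓ L₂ ∨ (a * b) • N = ⊥ := by
  intro a b L₁ L₂ _ _ h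
  have key : Ideal.span {a} • (Ideal.span {b} • N) = (a * b) • N := by
    rw [Submodule.ideal_span_singleton_smul, Submodule.ideal_span_singleton_smul,
      smul_smul]
  have key2 : Ideal.span {a} • secRad N = a • secRad N :=
    Submodule.ideal_span_singleton_smul a _
  have key3 : Ideal.span {b} • secRad N = b • secRad N :=
    Submodule.ideal_span_singleton_smul b _
  rcases hb (Ideal.span {a}) (Ideal.span {b}) (L₁ ⊓ L₂) (key ▸ h) with h' | h' | h'
  · exact Or.inl (key2 ▸ h')
  · exact Or.inr (Or.inl (key3 ▸ h'))
  · exact Or.inr (Or.inr (key ▸ h'))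

private lemma b_implies_c (N : Submodule R M)
    (hb : ∀ (I J : Ideal R) (K : Submodule R M), I • (J • N) ≤ K →
      I • secRad N ≤ K ∨ J • secRad N ≤ K ∨ I • (J • N) = ⊥) :
    ∀ a b : R,
      a • secRad N ≤ (a * b) • N ∨ b • secRad N ≤ (a * b) • N ∨ (a * b) • N = ⊥ := by
  intro a b
  have key : Ideal.span {a} • (Ideal.span {b} • N) = (a * b) • N := by
    rw [Submodule.ideal_span_singleton_smul, Submodule.ideal_span_singleton_smul,
      smul_smul]
  have key2 : Ideal.span {a} • secRad N = a • secRad N :=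
    Submodule.ideal_span_singleton_smul a _
  have key3 : Ideal.span {b} • secRad N = b • secRad N :=
    Submodule.ideal_span_singleton_smul b _
  rcases hb (Ideal.span {a}) (Ideal.span {b}) ((a * b) • N) (key ▸ le_rfl) with h | h | h
  · exact Or.inl (key2 ▸ h)
  · exact Or.inr (Or.inl (key3 ▸ h))
  · exact Or.inr (Or.inr (key ▸ h))

private lemma a_implies_c (N : Submodule R M)
    (ha : ∀ (a b : R) (L₁ L₂ : Submodule R M),
      CompletelyIrreducible L₁ → CompletelyIrreducible L₂ →
      (a * b) • N ≤ L₁ ⊓ L₂ →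
      a • secRad N ≤ L₁ ⊓ L₂ ∨ b • secRad N ≤ L₁ ⊓ L₂ ∨ (a * b) • N = ⊥) :
    ∀ a b : R,
      a • secRad N ≤ (a * b) • N ∨ b • secRad N ≤ (a * b) • N ∨ (a * b) • N = ⊥ := by
  intro a b
  by_contra hcon
  push_neg at hcon
  obtain ⟨h1, h2, h3⟩ := hcon
  obtain ⟨x, hx, hxN⟩ := SetLike.not_le_iff_exists.mp h1
  obtain ⟨y, hy, hyN⟩ := SetLike.not_le_iff_exists.mp h2
  obtain ⟨L₁, hL₁, hNL₁, hxL₁⟩ := exists_completelyIrreducible ((a * b) • N) x hxN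
  obtain ⟨L₂, hL₂, hNL₂, hyL₂⟩ := exists_completelyIrreducible ((a * b) • N) y hyN
  rcases ha a b L₁ L₂ hL₁ hL₂ (le_inf hNL₁ hNL₂) with h | h | h
  · exact hxL₁ (h hx).1
  · exact hyL₂ (h hy).2
  · exact h3 h

theorem stmt2 (N : Submodule R M) (hN : N ≠ ⊥) :
    ((∀ (a b : R) (L₁ L₂ : Submodule R M),
        CompletelyIrreducible L₁ → CompletelyIrreducible L₂ →
        (a * b) • N ≤ L₁ ⊓ L₂ →
        a • secRad N ≤ L₁ ⊓ L₂ ∨ b • secRad N ≤ L₁ ⊓ L₂ ∨ (a * b) • N = ⊥) ↔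
      (∀ (I J : Ideal R) (K : Submodule R M), I • (J • N) ≤ K →
        I • secRad N ≤ K ∨ J • secRad N ≤ K ∨ I • (J • N) = ⊥)) ∧
    ((∀ (I J : Ideal R) (K : Submodule R M), I • (J • N) ≤ K →
        I • secRad N ≤ K ∨ J • secRad N ≤ K ∨ I • (J • N) = ⊥) ↔
      (∀ a b : R,
        a • secRad N ≤ (a * b) • N ∨ b • secRad N ≤ (a * b) • N ∨ (a * b) • N = ⊥)) := by
  refine ⟨⟨fun ha => c_implies_b N (a_implies_c N ha), b_implies_a N⟩,
    ⟨b_implies_c N, c_implies_b N⟩⟩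
end

section
/- The submodule $N = \langle 1/p^3 + \mathbb{Z} \rangle$ of the $\mathbb{Z}$-module $\mathbb{Z}_{p^\infty}$ (the Prüfer $p$-group) is a strongly 2-absorbing secondary submodule of $\mathbb{Z}_{p^\infty}$ but is not a strongly 2-absorbing second submodule. -/
open Pointwise

variable {R : Type*} [CommRing R] {M : Type*} [AddCommGroup M] [Module R M]

section Aux
set_option linter.unusedSectionVars false
variable {M' : Type*} [AddCommGroup M']

lemma aux_hdef (a : ℤ) (S : Submodule ℤ M') :
    a • S = S.map (DistribMulAction.toLinearMap ℤ M' a) := rfl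

lemma aux_bridge (a : ℤ) (b : M') : DistribMulAction.toLinearMap ℤ M' a b = a • b := by
  have := Int.cast_smul_eq_zsmul (R := ℤ) a b
  rwa [Int.cast_id] at this

lemma aux_smul_span_singleton (a : ℤ) (x : M') :
    a • Submodule.span ℤ {x} = Submodule.span ℤ {a • x} := by
  rw [aux_hdef, Submodule.map_span, Set.image_singleton, aux_bridge]

lemma aux_mem_zsmul {a : ℤ} {S : Submodule ℤ M'} {y : M'} :
    y ∈ a • S ↔ ∃ s ∈ S, a • s = y := by
  rw [aux_hdef]
  simp only [Submodule.mem_map, aux_bridge]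

lemma aux_smul_le_self (a : ℤ) (S : Submodule ℤ M') : a • S ≤ S := by
  intro y hy
  obtain ⟨s, hs, rfl⟩ := aux_mem_zsmul.1 hy
  rw [← aux_bridge]
  exact S.smul_mem a hs

lemma aux_smul_eq_bot_iff (a : ℤ) (S : Submodule ℤ M') :
    a • S = ⊥ ↔ ∀ y ∈ S, a • y = 0 := by
  constructor
  · intro h y hy
    have : a • y ∈ a • S := aux_mem_zsmul.2 ⟨y, hy, rfl⟩
    rw [h] at this; simpa using this
  · intro h
    rw [eq_bot_iff]
    intro z hz
    obtain ⟨s, hs, rfl⟩ := aux_mem_zsmul.1 hz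
    simpa using h s hs

lemma aux_comp (a b : ℤ) (y : M') : a • b • y = (a * b) • y := by
  rw [mul_zsmul]

/-- If `p³ • x = 0` and `p² • x ≠ 0` then any annihilator of `x` is divisible by `p³`. -/
lemma aux_ord (p : ℕ) (hp : p.Prime) (x : M') (h3 : ((p : ℤ) ^ 3) • x = 0)
    (h2 : ((p : ℤ) ^ 2) • x ≠ 0) {n : ℤ} (hn : n • x = 0) : (p : ℤ) ^ 3 ∣ n := by
  set g : ℕ := Int.gcd n ((p : ℤ) ^ 3) with hg
  have hgx : (g : ℤ) • x = 0 := by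
    have hb : (g : ℤ) = n * Int.gcdA n ((p:ℤ)^3) + (p:ℤ)^3 * Int.gcdB n ((p:ℤ)^3) :=
      Int.gcd_eq_gcd_ab n ((p:ℤ)^3)
    rw [hb, add_zsmul, mul_comm n, mul_comm ((p:ℤ)^3), mul_zsmul, mul_zsmul, hn, h3,
      smul_zero, smul_zero, add_zero]
  have hgdvd : g ∣ p ^ 3 := by
    have h1 : (g : ℤ) ∣ (p : ℤ) ^ 3 := Int.gcd_dvd_right _ _
    have h2' : (g : ℤ) ∣ ((p ^ 3 : ℕ) : ℤ) := by push_cast; exact h1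
    exact_mod_cast h2'
  obtain ⟨k, hk3, hgk⟩ := (Nat.dvd_prime_pow hp).mp hgdvd
  rcases Nat.lt_or_ge k 3 with hk | hk
  · exfalso
    apply h2
    have h0 : ((p : ℤ) ^ (2 - k)) • ((g : ℤ) • x) = 0 := by rw [hgx, smul_zero]
    rw [← mul_zsmul] at h0
    have hpg : (p : ℤ) ^ (2 - k) * (g : ℤ) = (p : ℤ) ^ 2 := by
      rw [hgk]; push_cast
      rw [← pow_add]
      congr 1
      omega
    rwa [hpg] at h0
  · have hk3' : k = 3 := le_antisymm hk3 hk
    have hdvd : (g : ℤ) ∣ n := Int.gcd_dvd_left _ _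
    rw [hgk, hk3'] at hdvd
    exact_mod_cast hdvd

lemma aux_mem_span_singleton {x y : M'} :
    y ∈ Submodule.span ℤ {x} ↔ ∃ c : ℤ, c • x = y := by
  constructor
  · intro h
    obtain ⟨c, hc⟩ := Submodule.mem_span_singleton.1 h
    refine ⟨c, ?_⟩
    rw [← aux_bridge]
    exact hc
  · rintro ⟨c, rfl⟩
    apply Submodule.mem_span_singleton.2
    refine ⟨c, ?_⟩
    show DistribMulAction.toLinearMap ℤ M' c x = _
    rw [aux_bridge]

lemma aux_secRad_le (p : ℕ) (hp : p.Prime) (x : M') (h3 : ((p : ℤ) ^ 3) • x = 0)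
    (h2 : ((p : ℤ) ^ 2) • x ≠ 0) :
    secRad (Submodule.span ℤ {x}) ≤ Submodule.span ℤ {((p : ℤ) ^ 2) • x} := by
  apply sSup_le
  rintro S ⟨⟨hSne, hSsec⟩, hSle⟩
  rcases hSsec ((p : ℤ)) with hps | hps
  · exfalso
    apply hSne
    have e : ((p : ℤ) ^ 3) • S = S := by
      have h' : (p : ℤ) ^ 3 = (p : ℤ) * ((p : ℤ) * (p : ℤ)) := by ring
      rw [h', mul_smul, mul_smul, hps, hps, hps]
    have mono : ((p : ℤ) ^ 3) • S ≤ ((p : ℤ) ^ 3) • Submodule.span ℤ {x} := by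
      rw [aux_hdef, aux_hdef]
      exact Submodule.map_mono hSle
    rw [e, aux_smul_span_singleton, h3, Submodule.span_zero_singleton, le_bot_iff] at mono
    exact mono
  · intro y hy
    have hpy : (p : ℤ) • y = 0 := (aux_smul_eq_bot_iff _ _).1 hps y hy
    obtain ⟨c, rfl⟩ := aux_mem_span_singleton.1 (hSle hy)
    rw [← mul_zsmul] at hpy
    have hdvd : (p : ℤ) ^ 3 ∣ (p : ℤ) * c := aux_ord p hp x h3 h2 hpy
    obtain ⟨d, hd⟩ := hdvd
    have hc : c = (p : ℤ) ^ 2 * d := by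
      have hp0 : (p : ℤ) ≠ 0 := Int.natCast_ne_zero.2 hp.pos.ne'
      have : (p : ℤ) * c = (p : ℤ) * ((p : ℤ) ^ 2 * d) := by rw [hd]; ring
      exact mul_left_cancel₀ hp0 this
    apply aux_mem_span_singleton.2
    exact ⟨d, by rw [hc, ← mul_zsmul, mul_comm d]⟩

lemma aux_p2_mem (p : ℕ) (hp : p.Prime) (x : M') (h3 : ((p : ℤ) ^ 3) • x = 0)
    {m : ℤ} (hm : ¬ (p : ℤ) ^ 3 ∣ m) :
    ((p : ℤ) ^ 2) • x ∈ Submodule.span ℤ {m • x} := by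
  set g : ℕ := Int.gcd m ((p : ℤ) ^ 3) with hg
  have hgdvd : g ∣ p ^ 3 := by
    have h1 : (g : ℤ) ∣ (p : ℤ) ^ 3 := Int.gcd_dvd_right _ _
    have h2' : (g : ℤ) ∣ ((p ^ 3 : ℕ) : ℤ) := by push_cast; exact h1
    exact_mod_cast h2'
  obtain ⟨k, hk3, hgk⟩ := (Nat.dvd_prime_pow hp).mp hgdvd
  have hk2 : k ≤ 2 := by
    rcases Nat.lt_or_ge k 3 with h | h
    · omega
    · exfalso
      apply hm
      have : (g : ℤ) ∣ m := Int.gcd_dvd_left _ _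
      rw [hgk, le_antisymm hk3 h] at this
      exact_mod_cast this
  have hb : (g : ℤ) = m * Int.gcdA m ((p:ℤ)^3) + (p:ℤ)^3 * Int.gcdB m ((p:ℤ)^3) :=
    Int.gcd_eq_gcd_ab m ((p:ℤ)^3)
  apply aux_mem_span_singleton.2
  refine ⟨(p : ℤ) ^ (2 - k) * Int.gcdA m ((p:ℤ)^3), ?_⟩
  have key : (p : ℤ) ^ (2 - k) * (g : ℤ) = (p : ℤ) ^ 2 := by
    rw [hgk]; push_cast
    rw [← pow_add]
    congr 1
    omega
  have hz : ((Int.gcdB m ((p:ℤ)^3)) * (p:ℤ)^3) • x = 0 := by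
    rw [← aux_comp, h3, smul_zero]
  have hgsum : m * Int.gcdA m ((p:ℤ)^3) + Int.gcdB m ((p:ℤ)^3) * (p:ℤ)^3 = (g : ℤ) := by
    rw [hb]; ring
  calc ((p : ℤ) ^ (2 - k) * Int.gcdA m ((p:ℤ)^3)) • (m • x)
      = ((p : ℤ) ^ (2 - k) * Int.gcdA m ((p:ℤ)^3) * m) • x := aux_comp _ _ _
    _ = ((p : ℤ) ^ (2 - k) * (m * Int.gcdA m ((p:ℤ)^3))) • x := by ring_nf
    _ = ((p : ℤ) ^ (2 - k)) • ((m * Int.gcdA m ((p:ℤ)^3)) • x) := (aux_comp _ _ _).symm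
    _ = ((p : ℤ) ^ (2 - k)) • ((m * Int.gcdA m ((p:ℤ)^3)) • x
          + ((Int.gcdB m ((p:ℤ)^3)) * (p:ℤ)^3) • x) := by rw [hz, add_zero]
    _ = ((p : ℤ) ^ (2 - k)) • ((g : ℤ) • x) := by rw [← add_zsmul, hgsum]
    _ = ((p : ℤ) ^ 2) • x := by rw [aux_comp, key]

lemma aux_main (p : ℕ) (hp : p.Prime) (x : M') (h3 : ((p : ℤ) ^ 3) • x = 0)
    (h2 : ((p : ℤ) ^ 2) • x ≠ 0) :
    IsS2AbsSecondary (Submodule.span ℤ {x}) ∧ ¬ IsS2AbsSecond (Submodule.span ℤ {x}) := by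
  have hp0 : (p : ℤ) ≠ 0 := Int.natCast_ne_zero.2 hp.pos.ne'
  have hx0 : x ≠ 0 := by rintro rfl; exact h2 (smul_zero _)
  have hNbot : Submodule.span ℤ {x} ≠ ⊥ := by
    simpa [Submodule.span_singleton_eq_bot] using hx0
  constructor
  · refine ⟨hNbot, ?_⟩
    intro a b K hK
    by_cases hab : (a * b) • x = 0
    · right; right
      rw [aux_smul_span_singleton, hab, Submodule.span_zero_singleton]
    · left
      have hnd : ¬ (p : ℤ) ^ 3 ∣ a * b := by
        rintro ⟨c, hc⟩
        exact hab (by rw [hc, mul_comm, ← aux_comp, h3, smul_zero])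
      have hmem : ((p : ℤ) ^ 2) • x ∈ K := by
        have h1 : Submodule.span ℤ {(a * b) • x} ≤ K := by
          rw [← aux_smul_span_singleton]; exact hK
        exact h1 (aux_p2_mem p hp x h3 hnd)
      have hsec : secRad (Submodule.span ℤ {x}) ≤ K :=
        (aux_secRad_le p hp x h3 h2).trans
          (Submodule.span_le.2 (Set.singleton_subset_iff.2 hmem))
      exact (aux_smul_le_self a _).trans hsec
  · rintro ⟨-, h⟩
    have harg : ((p : ℤ) * (p : ℤ)) • Submodule.span ℤ {x}
        ≤ Submodule.span ℤ {((p : ℤ) ^ 2) • x} := by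
      rw [aux_smul_span_singleton]
      have e : ((p : ℤ) * (p : ℤ)) = (p : ℤ) ^ 2 := by ring
      rw [e]
    have contra : ¬ ((p : ℤ) • Submodule.span ℤ {x}
        ≤ Submodule.span ℤ {((p : ℤ) ^ 2) • x}) := by
      intro h1
      have hpx : (p : ℤ) • x ∈ Submodule.span ℤ {((p : ℤ) ^ 2) • x} := by
        apply h1
        rw [aux_smul_span_singleton]
        exact Submodule.mem_span_singleton_self _
      obtain ⟨c, hc⟩ := aux_mem_span_singleton.1 hpx
      rw [aux_comp] at hc
      have hz : (c * (p : ℤ) ^ 2 - (p : ℤ)) • x = 0 := by rw [sub_zsmul, hc]; abel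
      have hdvd := aux_ord p hp x h3 h2 hz
      have h2d : (p : ℤ) ^ 2 ∣ (p : ℤ) := by
        have ha : (p : ℤ) ^ 2 ∣ c * (p : ℤ) ^ 2 := ⟨c, by ring⟩
        have hb2 : (p : ℤ) ^ 2 ∣ c * (p : ℤ) ^ 2 - (p : ℤ) :=
          dvd_trans ⟨(p : ℤ), by ring⟩ hdvd
        have hsub := dvd_sub ha hb2
        simpa using hsub
      obtain ⟨d, hd⟩ := h2d
      have hcancel : (p : ℤ) * 1 = (p : ℤ) * ((p : ℤ) * d) := by linear_combination hd
      have h1d : (1 : ℤ) = (p : ℤ) * d := mul_left_cancel₀ hp0 hcancel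
      have hdv1 : (p : ℤ) ∣ 1 := ⟨d, h1d⟩
      have hle := Int.le_of_dvd one_pos hdv1
      have hple : p ≤ 1 := by exact_mod_cast hle
      have := hp.two_le
      omega
    rcases h (p : ℤ) (p : ℤ) _ harg with h1 | h1 | h1
    · exact contra h1
    · exact contra h1
    · rw [aux_smul_span_singleton] at h1
      have hz := Submodule.span_singleton_eq_bot.1 h1
      apply h2
      have e : (p : ℤ) ^ 2 = (p : ℤ) * (p : ℤ) := by ring
      rw [e]
      exact hz


end Aux

theorem stmt4 (p : ℕ) (hp : p.Prime)
    (x : Submodule.torsion' ℤ (ℚ ⧸ Submodule.span ℤ ({1} : Set ℚ))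
      (Submonoid.powers (p : ℤ)))
    (hx : (x : ℚ ⧸ Submodule.span ℤ ({1} : Set ℚ)) =
      Submodule.Quotient.mk (((p : ℚ) ^ 3)⁻¹)) :
    IsS2AbsSecondary (Submodule.span ℤ {x}) ∧
      ¬ IsS2AbsSecond (Submodule.span ℤ {x}) := by
  classical
  have hp0 : (p : ℚ) ≠ 0 := Nat.cast_ne_zero.2 hp.pos.ne'
  have key : ∀ n : ℤ, ((n • x : _) : ℚ ⧸ Submodule.span ℤ ({1} : Set ℚ)) =
      Submodule.Quotient.mk ((n : ℚ) * ((p : ℚ) ^ 3)⁻¹) := by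
    intro n
    have hc : ((n • x : _) : ℚ ⧸ Submodule.span ℤ ({1} : Set ℚ)) =
        n • (x : ℚ ⧸ Submodule.span ℤ ({1} : Set ℚ)) := rfl
    rw [hc, hx]
    have hmk : n • (Submodule.Quotient.mk (((p : ℚ) ^ 3)⁻¹) :
        ℚ ⧸ Submodule.span ℤ ({1} : Set ℚ)) =
        Submodule.Quotient.mk (n • ((p : ℚ) ^ 3)⁻¹) := by
      rw [← Submodule.mkQ_apply, ← map_zsmul, Submodule.mkQ_apply]
    rw [hmk]
    congr 1
  have h3 : ((p : ℤ) ^ 3) • x = 0 := by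
    refine Subtype.ext ?_
    rw [key]
    show _ = (0 : ℚ ⧸ Submodule.span ℤ ({1} : Set ℚ))
    have e : (((p : ℤ) ^ 3 : ℤ) : ℚ) * ((p : ℚ) ^ 3)⁻¹ = 1 := by
      push_cast
      field_simp
    rw [e, Submodule.Quotient.mk_eq_zero]
    exact Submodule.mem_span_singleton_self _
  have h2 : ((p : ℤ) ^ 2) • x ≠ 0 := by
    intro hcon
    have hco := congrArg Subtype.val hcon
    rw [key] at hco
    have hco' : (Submodule.Quotient.mk ((((p : ℤ) ^ 2 : ℤ) : ℚ) * ((p : ℚ) ^ 3)⁻¹) :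
        ℚ ⧸ Submodule.span ℤ ({1} : Set ℚ)) = 0 := hco
    have e : (((p : ℤ) ^ 2 : ℤ) : ℚ) * ((p : ℚ) ^ 3)⁻¹ = (p : ℚ)⁻¹ := by
      push_cast
      field_simp
    rw [e, Submodule.Quotient.mk_eq_zero] at hco'
    obtain ⟨n, hn⟩ := Submodule.mem_span_singleton.1 hco'
    have hn' : ((n : ℚ)) = (p : ℚ)⁻¹ := by
      rw [← hn]; simp
    have hq : ((n * p : ℤ) : ℚ) = 1 := by
      push_cast
      rw [hn']
      field_simp
    have h1 : n * (p : ℤ) = 1 := by exact_mod_cast hq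
    have hdv : (p : ℤ) ∣ 1 := ⟨n, by linarith [h1]⟩
    have hle := Int.le_of_dvd one_pos hdv
    have hple : p ≤ 1 := by exact_mod_cast hle
    have := hp.two_le
    omega
  exact aux_main p hp x h3 h2
end

section
/- Let $M$ be a finitely generated comultiplication $R$-module. If $N$ is a strongly 2-absorbing secondary submodule of $M$, then $\mathrm{Ann}_R(N)$ is a 2-absorbing primary ideal of $R$. -/
open Pointwise

variable {R : Type*} [CommRing R] {M : Type*} [AddCommGroup M] [Module R M]

/-- `(0 :_M I)`, the set of elements of `M` annihilated by the ideal `I`. -/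
def ann0 (I : Ideal R) : Submodule R M where
  carrier := {m | ∀ r ∈ I, r • m = 0}
  add_mem' := fun {a b} ha hb r hr => by rw [smul_add, ha r hr, hb r hr, add_zero]
  zero_mem' := fun r _ => smul_zero r
  smul_mem' := fun c m hm r hr => by
    rw [smul_comm, hm r hr, smul_zero]

lemma mem_ann0 {I : Ideal R} {m : M} : m ∈ ann0 (M := M) I ↔ ∀ r ∈ I, r • m = 0 := Iff.rfl

lemma mem_psmul {a : R} {S : Submodule R M} {m : M} :
    m ∈ a • S ↔ ∃ n ∈ S, a • n = m := by
  rw [← SetLike.mem_coe, Submodule.coe_pointwise_smul]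
  exact Set.mem_smul_set

/-- Key lemma: in a f.g. comultiplication module, the annihilator of `(0 :_M p)`
is contained in `p`, for any prime `p` containing `Ann M`. -/
lemma crux [Module.Finite R M] (hM : IsComultiplication R M) {p : Ideal R}
    (hp : p.IsPrime) (hpM : (⊤ : Submodule R M).annihilator ≤ p) :
    (ann0 (M := M) p).annihilator ≤ p := by
  obtain ⟨s, hs⟩ : (⊤ : Submodule R M).FG := Module.finite_def.mp ‹Module.Finite R M›
  -- product of the annihilators of generators is contained in Ann ⊤
  have hprod : (∏ x ∈ s, (Submodule.span R {x}).annihilator) ≤ (⊤ : Submodule R M).annihilator := by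
    intro r hr
    rw [Submodule.mem_annihilator]
    intro m hmT
    clear hmT
    have hm' : m ∈ Submodule.span R (↑s : Set M) := by rw [hs]; trivial
    induction hm' using Submodule.span_induction with
    | mem x hx =>
        have h1 : r ∈ (Submodule.span R {x}).annihilator :=
          (Ideal.prod_le_inf.trans (Finset.inf_le hx)) hr
        exact Submodule.mem_annihilator.mp h1 x (Submodule.mem_span_singleton_self x)
    | zero => exact smul_zero r
    | add x y _ _ hx hy => rw [smul_add, hx, hy, add_zero]
    | smul c x _ hx => rw [smul_comm, hx, smul_zero]
  obtain ⟨x, -, hx⟩ : ∃ x ∈ s, (Submodule.span R {x}).annihilator ≤ p :=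
    hp.prod_le.mp (hprod.trans hpM)
  intro u hu
  have hu' : ∀ m ∈ ann0 (M := M) p, u • m = 0 := Submodule.mem_annihilator.mp hu
  set N0 : Submodule R M := p • Submodule.span R {x} with hN0
  have hux : u • x ∈ N0 := by
    rw [hM N0]
    intro t ht
    have htx : t • x ∈ ann0 (M := M) p := by
      intro a ha
      have hax : a • x ∈ N0 :=
        Submodule.smul_mem_smul ha (Submodule.mem_span_singleton_self x)
      have h0 : t • (a • x) = 0 := Submodule.mem_annihilator.mp ht _ hax
      rw [smul_comm] at h0
      exact h0
    have h1 : u • (t • x) = 0 := hu' _ htx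
    rw [smul_comm] at h1
    exact h1
  rw [hN0, Submodule.mem_smul_span_singleton] at hux
  obtain ⟨a, ha, hax⟩ := hux
  have : (u - a) • x = 0 := by rw [sub_smul, hax, sub_self]
  have hmem : u - a ∈ (Submodule.span R {x}).annihilator := by
    rw [Submodule.mem_annihilator_span_singleton]
    exact this
  have : u - a ∈ p := hx hmem
  have := p.add_mem this ha
  rwa [sub_add_cancel] at this

/-- For a prime `p ⊇ Ann M`, `(0 :_M p)` is a second submodule with annihilator `p`. -/
lemma ann0_second [Module.Finite R M] (hM : IsComultiplication R M) {p : Ideal R}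
    (hp : p.IsPrime) (hpM : (⊤ : Submodule R M).annihilator ≤ p) :
    IsSecond (ann0 (M := M) p) ∧ (ann0 (M := M) p).annihilator = p := by
  have hle : p ≤ (ann0 (M := M) p).annihilator := by
    intro r hr
    rw [Submodule.mem_annihilator]
    exact fun m hm => hm r hr
  have hann : (ann0 (M := M) p).annihilator = p := le_antisymm (crux hM hp hpM) hle
  have hne : ann0 (M := M) p ≠ ⊥ := by
    intro h
    rw [h, Submodule.annihilator_bot] at hann
    exact hp.ne_top hann.symm
  refine ⟨⟨hne, ?_⟩, hann⟩
  intro a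
  by_cases hap : a ∈ p
  · right
    rw [eq_bot_iff]
    intro m hm
    obtain ⟨n, hn, rfl⟩ := mem_psmul.mp hm
    exact hn a hap
  · left
    apply le_antisymm
    · intro m hm
      obtain ⟨n, hn, rfl⟩ := mem_psmul.mp hm
      exact Submodule.smul_mem _ a hn
    · intro m hm
      rw [hM (a • ann0 (M := M) p)]
      intro t ht
      have hta : t * a ∈ (ann0 (M := M) p).annihilator := by
        rw [Submodule.mem_annihilator]
        intro n hn
        have : t • (a • n) = 0 :=
          Submodule.mem_annihilator.mp ht _ (Submodule.smul_mem_pointwise_smul n a _ hn)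
        rwa [← mul_smul] at this
      rw [hann] at hta
      have htp : t ∈ p := (hp.mem_or_mem hta).resolve_right hap
      exact hm t htp

/-- `Ann(secRad N) ≤ radical (Ann N)` for f.g. comultiplication modules. -/
lemma ann_secRad_le_radical [Module.Finite R M] (hM : IsComultiplication R M)
    (N : Submodule R M) : (secRad N).annihilator ≤ N.annihilator.radical := by
  intro u hu
  by_contra hur
  rw [Ideal.radical_eq_sInf] at hur
  obtain ⟨p, ⟨hpN, hp⟩, hup⟩ : ∃ p ∈ {J : Ideal R | N.annihilator ≤ J ∧ J.IsPrime}, u ∉ p := by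
    by_contra h
    push_neg at h
    exact hur (Submodule.mem_sInf.mpr h)
  have hpM : (⊤ : Submodule R M).annihilator ≤ p := by
    refine le_trans ?_ hpN
    intro r hr
    rw [Submodule.mem_annihilator] at hr ⊢
    exact fun n _ => hr n trivial
  obtain ⟨hsec, hann⟩ := ann0_second hM hp hpM
  have hSN : ann0 (M := M) p ≤ N := by
    intro m hm
    rw [hM N]
    intro r hr
    exact hm r (hpN hr)
  have hSsec : ann0 (M := M) p ≤ secRad N := le_sSup ⟨hsec, hSN⟩
  have : u ∈ (ann0 (M := M) p).annihilator := by
    rw [Submodule.mem_annihilator] at hu ⊢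
    exact fun n hn => hu n (hSsec hn)
  rw [hann] at this
  exact hup this

theorem stmt5 [Module.Finite R M] (hM : IsComultiplication R M)
    (N : Submodule R M) (hN : IsS2AbsSecondary N) :
    Is2AbsPrimaryIdeal (Submodule.annihilator N) := by
  constructor
  · intro h
    apply hN.1
    rw [eq_bot_iff]
    intro n hn
    have h1 : (1 : R) ∈ N.annihilator := h ▸ trivial
    have := Submodule.mem_annihilator.mp h1 n hn
    rw [one_smul] at this
    exact this
  · intro a b c habc
    set K : Submodule R M := LinearMap.ker (LinearMap.lsmul R M c) with hK
    have hcK : ∀ m : M, m ∈ K ↔ c • m = 0 := by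
      intro m
      rw [hK, LinearMap.mem_ker, LinearMap.lsmul_apply]
    have hle : (a * b) • N ≤ K := by
      intro m hm
      obtain ⟨n, hn, rfl⟩ := mem_psmul.mp hm
      rw [hcK, ← mul_smul]
      have h0 := Submodule.mem_annihilator.mp habc n hn
      rw [show c * (a * b) = a * b * c by ring]
      exact h0
    rcases hN.2 a b K hle with h1 | h2 | h3
    · right; left
      apply ann_secRad_le_radical hM N
      rw [Submodule.mem_annihilator]
      intro y hy
      have : a • y ∈ K := h1 (Submodule.smul_mem_pointwise_smul y a _ hy)
      rw [hcK, ← mul_smul] at this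
      rwa [show a * c = c * a by ring]
    · right; right
      apply ann_secRad_le_radical hM N
      rw [Submodule.mem_annihilator]
      intro y hy
      have : b • y ∈ K := h2 (Submodule.smul_mem_pointwise_smul y b _ hy)
      rw [hcK, ← mul_smul] at this
      rwa [show b * c = c * b by ring]
    · left
      rw [Submodule.mem_annihilator]
      intro n hn
      have : (a * b) • n ∈ (a * b) • N := Submodule.smul_mem_pointwise_smul n (a * b) N hn
      rw [h3] at this
      exact this
end

section
/- The $\mathbb{Z}$-module $M = \mathbb{Z}_p \oplus \mathbb{Z}_q \oplus \mathbb{Q}$, where $p \ne q$ are primes, satisfies: $\mathrm{Ann}_{\mathbb{Z}}(M) = 0$ is a 2-absorbing primary ideal of $\mathbb{Z}$, but $M$ is not a strongly 2-absorbing secondary module. -/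
open Pointwise

variable {R : Type*} [CommRing R] {M : Type*} [AddCommGroup M] [Module R M]

theorem stmt7 (p q : ℕ) (hp : p.Prime) (hq : q.Prime) (hpq : p ≠ q) :
    Submodule.annihilator (⊤ : Submodule ℤ (ZMod p × ZMod q × ℚ)) = ⊥ ∧
    Is2AbsPrimaryIdeal
      (Submodule.annihilator (⊤ : Submodule ℤ (ZMod p × ZMod q × ℚ))) ∧
    ¬ IsS2AbsSecondary (⊤ : Submodule ℤ (ZMod p × ZMod q × ℚ)) := by
  haveI := Fact.mk hp
  haveI := Fact.mk hq
  have hann : Submodule.annihilator (⊤ : Submodule ℤ (ZMod p × ZMod q × ℚ)) = ⊥ := by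
    ext r
    simp only [Submodule.mem_annihilator, Submodule.mem_bot]
    constructor
    · intro h
      have h1 := h ((0 : ZMod p), (0 : ZMod q), (1 : ℚ)) trivial
      have h2 := congrArg (fun x => x.2.2) h1
      simpa using h2
    · rintro rfl m _; simp
  refine ⟨hann, ?_, ?_⟩
  · rw [hann]
    constructor
    · intro h
      have : (1 : ℤ) ∈ (⊥ : Ideal ℤ) := h ▸ Submodule.mem_top
      simpa using this
    · intro a b c habc
      simp only [Ideal.mem_bot] at habc
      rcases mul_eq_zero.mp habc with h | h
      · exact Or.inl (Ideal.mem_bot.mpr h)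
      · exact Or.inr (Or.inl (by rw [h, mul_zero]; exact Ideal.radical_mono bot_le (Ideal.zero_mem _)))
  · rintro ⟨-, h⟩
    -- K = 0 × 0 × ℚ
    set K : Submodule ℤ (ZMod p × ZMod q × ℚ) :=
      (⊥ : Submodule ℤ (ZMod p)).prod ((⊥ : Submodule ℤ (ZMod q)).prod ⊤) with hKdef
    have hzp : ∀ a : ℤ, ∀ x : ZMod p, a • x = (a : ZMod p) * x := fun a x => by
      rw [← zsmul_eq_mul]
    have hzq : ∀ a : ℤ, ∀ x : ZMod q, a • x = (a : ZMod q) * x := fun a x => by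
      rw [← zsmul_eq_mul]
    have hK : ((p : ℤ) * (q : ℤ)) • (⊤ : Submodule ℤ (ZMod p × ZMod q × ℚ)) ≤ K := by
      rintro x ⟨y, -, rfl⟩
      refine ⟨?_, ?_, trivial⟩
      · show ((p : ℤ) * (q : ℤ)) • y.1 ∈ (⊥ : Submodule ℤ (ZMod p))
        simp [hzp, ZMod.natCast_self]
      · show ((p : ℤ) * (q : ℤ)) • y.2.1 ∈ (⊥ : Submodule ℤ (ZMod q))
        simp [hzq, ZMod.natCast_self]
    rcases h p q K hK with h1 | h1 | h1
    · -- p • secRad ⊤ ≤ K is false; use S = 0 × ZMod q × 0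
      set S : Submodule ℤ (ZMod p × ZMod q × ℚ) :=
        (⊥ : Submodule ℤ (ZMod p)).prod ((⊤ : Submodule ℤ (ZMod q)).prod ⊥) with hSdef
      have hSsec : IsSecond S := by
        constructor
        · intro hbot
          have : ((0 : ZMod p), (1 : ZMod q), (0 : ℚ)) ∈ S := ⟨rfl, trivial, rfl⟩
          rw [hbot, Submodule.mem_bot] at this
          exact one_ne_zero (congrArg (fun z : ZMod p × ZMod q × ℚ => z.2.1) this)
        · intro a
          by_cases hd : (q : ℤ) ∣ a
          · right
            rw [eq_bot_iff]
            rintro x ⟨y, hy, rfl⟩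
            obtain ⟨hy1, hy2, hy3⟩ := hy
            replace hy1 : y.1 = 0 := hy1
            replace hy3 : y.2.2 = 0 := hy3
            have ha0 : (a : ZMod q) = 0 := (ZMod.intCast_zmod_eq_zero_iff_dvd a q).mpr hd
            show a • y ∈ (⊥ : Submodule ℤ (ZMod p × ZMod q × ℚ))
            rw [Submodule.mem_bot]
            refine Prod.ext ?_ (Prod.ext ?_ ?_)
            · simp [hy1]
            · show a • y.2.1 = ((0 : ZMod p × ZMod q × ℚ)).2.1
              rw [hzq, ha0, zero_mul]; rfl
            · simp [hy3]
          · left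
            apply le_antisymm
            · rintro x ⟨y, hy, rfl⟩
              exact S.smul_mem a hy
            · rintro x ⟨hx1, hx2, hx3⟩
              replace hx1 : x.1 = 0 := hx1
              replace hx3 : x.2.2 = 0 := hx3
              have ha0 : (a : ZMod q) ≠ 0 := fun h0 =>
                hd ((ZMod.intCast_zmod_eq_zero_iff_dvd a q).mp h0)
              refine ⟨(0, ((a : ZMod q))⁻¹ * x.2.1, 0), ⟨rfl, trivial, rfl⟩, ?_⟩
              refine Prod.ext ?_ (Prod.ext ?_ ?_)
              · simp [hx1]
              · show a • ((a : ZMod q)⁻¹ * x.2.1) = x.2.1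
                rw [hzq, ← mul_assoc, mul_inv_cancel₀ ha0, one_mul]
              · simp [hx3]
      have hSle : S ≤ secRad (⊤ : Submodule ℤ (ZMod p × ZMod q × ℚ)) :=
        le_sSup ⟨hSsec, le_top⟩
      have hx : ((0 : ZMod p), (1 : ZMod q), (0 : ℚ)) ∈ secRad (⊤ : Submodule ℤ (ZMod p × ZMod q × ℚ)) :=
        hSle ⟨rfl, trivial, rfl⟩
      have := h1 (Submodule.smul_mem_pointwise_smul _ (p : ℤ) _ hx)
      obtain ⟨-, h2, -⟩ := this
      replace h2 : (p : ℤ) • (1 : ZMod q) = 0 := h2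
      have : ((p : ℤ) : ZMod q) * 1 = 0 := by rw [← hzq]; exact h2
      rw [mul_one] at this
      have : ((p : ℕ) : ZMod q) = 0 := by exact_mod_cast this
      exact hpq ((Nat.prime_dvd_prime_iff_eq hq hp).mp
        ((ZMod.natCast_eq_zero_iff p q).mp this)).symm
    · -- q • secRad ⊤ ≤ K is false; use S = ZMod p × 0 × 0
      set S : Submodule ℤ (ZMod p × ZMod q × ℚ) :=
        (⊤ : Submodule ℤ (ZMod p)).prod ((⊥ : Submodule ℤ (ZMod q)).prod ⊥) with hSdef
      have hSsec : IsSecond S := by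
        constructor
        · intro hbot
          have : ((1 : ZMod p), (0 : ZMod q), (0 : ℚ)) ∈ S := ⟨trivial, rfl, rfl⟩
          rw [hbot, Submodule.mem_bot] at this
          exact one_ne_zero (congrArg (fun z : ZMod p × ZMod q × ℚ => z.1) this)
        · intro a
          by_cases hd : (p : ℤ) ∣ a
          · right
            rw [eq_bot_iff]
            rintro x ⟨y, hy, rfl⟩
            obtain ⟨hy1, hy2, hy3⟩ := hy
            replace hy2 : y.2.1 = 0 := hy2
            replace hy3 : y.2.2 = 0 := hy3
            have ha0 : (a : ZMod p) = 0 := (ZMod.intCast_zmod_eq_zero_iff_dvd a p).mpr hd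
            show a • y ∈ (⊥ : Submodule ℤ (ZMod p × ZMod q × ℚ))
            rw [Submodule.mem_bot]
            refine Prod.ext ?_ (Prod.ext ?_ ?_)
            · show a • y.1 = ((0 : ZMod p × ZMod q × ℚ)).1
              rw [hzp, ha0, zero_mul]; rfl
            · simp [hy2]
            · simp [hy3]
          · left
            apply le_antisymm
            · rintro x ⟨y, hy, rfl⟩
              exact S.smul_mem a hy
            · rintro x ⟨hx1, hx2, hx3⟩
              replace hx2 : x.2.1 = 0 := hx2
              replace hx3 : x.2.2 = 0 := hx3
              have ha0 : (a : ZMod p) ≠ 0 := fun h0 =>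
                hd ((ZMod.intCast_zmod_eq_zero_iff_dvd a p).mp h0)
              refine ⟨(((a : ZMod p))⁻¹ * x.1, 0, 0), ⟨trivial, rfl, rfl⟩, ?_⟩
              refine Prod.ext ?_ (Prod.ext ?_ ?_)
              · show a • ((a : ZMod p)⁻¹ * x.1) = x.1
                rw [hzp, ← mul_assoc, mul_inv_cancel₀ ha0, one_mul]
              · simp [hx2]
              · simp [hx3]
      have hSle : S ≤ secRad (⊤ : Submodule ℤ (ZMod p × ZMod q × ℚ)) :=
        le_sSup ⟨hSsec, le_top⟩
      have hx : ((1 : ZMod p), (0 : ZMod q), (0 : ℚ)) ∈ secRad (⊤ : Submodule ℤ (ZMod p × ZMod q × ℚ)) :=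
        hSle ⟨trivial, rfl, rfl⟩
      have := h1 (Submodule.smul_mem_pointwise_smul _ (q : ℤ) _ hx)
      obtain ⟨h2, -, -⟩ := this
      replace h2 : (q : ℤ) • (1 : ZMod p) = 0 := h2
      have : ((q : ℤ) : ZMod p) * 1 = 0 := by rw [← hzp]; exact h2
      rw [mul_one] at this
      have : ((q : ℕ) : ZMod p) = 0 := by exact_mod_cast this
      exact hpq ((Nat.prime_dvd_prime_iff_eq hp hq).mp
        ((ZMod.natCast_eq_zero_iff q p).mp this))
    · -- (pq) • ⊤ ≠ ⊥
      have hmem : ((p : ℤ) * (q : ℤ)) • ((0 : ZMod p), (0 : ZMod q), (1 : ℚ))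
          ∈ ((p : ℤ) * (q : ℤ)) • (⊤ : Submodule ℤ (ZMod p × ZMod q × ℚ)) :=
        Submodule.smul_mem_pointwise_smul _ _ _ trivial
      rw [h1] at hmem
      simp only [Submodule.mem_bot] at hmem
      have h2 := congrArg (fun x : ZMod p × ZMod q × ℚ => x.2.2) hmem
      have : ((p : ℤ) * (q : ℤ)) • (1 : ℚ) = 0 := h2
      rw [zsmul_eq_mul, mul_one] at this
      have hp0 : (p : ℤ) ≠ 0 := Int.natCast_ne_zero.mpr hp.ne_zero
      have hq0 : (q : ℤ) ≠ 0 := Int.natCast_ne_zero.mpr hq.ne_zero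
      have : ((p : ℤ) * (q : ℤ) : ℚ) = 0 := by exact_mod_cast this
      rcases mul_eq_zero.mp (by exact_mod_cast this : (p : ℤ) * (q : ℤ) = 0) with h | h
      · exact hp0 h
      · exact hq0 h
end

section
/- Let $N$ be a submodule of an $R$-module $M$ such that $\mathrm{sec}(N)$ is a second submodule of $M$. Then $N$ is a strongly 2-absorbing secondary submodule of $M$. -/
open Pointwise

variable {R : Type*} [CommRing R] {M : Type*} [AddCommGroup M] [Module R M]

theorem stmt10 (N : Submodule R M) (h : IsSecond (secRad N)) :
    IsS2AbsSecondary N := by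
  obtain ⟨hne, hsec⟩ := h
  have hle : secRad N ≤ N := sSup_le (fun S hS => hS.2)
  refine ⟨fun hN => hne (le_bot_iff.mp (hN ▸ hle)), fun a b K hK => ?_⟩
  rcases hsec a with ha | ha
  · rcases hsec b with hb | hb
    · left
      rw [ha]
      calc secRad N = (a*b) • secRad N := by rw [mul_smul, hb, ha]
        _ ≤ (a*b) • N := smul_mono_right _ hle
        _ ≤ K := hK
    · right; left; rw [hb]; exact bot_le
  · left; rw [ha]; exact bot_le
end

section
/- Let $f : M \to M'$ be an injective homomorphism of $R$-modules and $N$ a submodule of $M$. Then $\mathrm{sec}(f(N)) = f(\mathrm{sec}(N))$. -/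
open Pointwise

variable {R : Type*} [CommRing R] {M : Type*} [AddCommGroup M] [Module R M]

theorem stmt13 {M' : Type*} [AddCommGroup M'] [Module R M']
    (f : M →ₗ[R] M') (hf : Function.Injective f) (N : Submodule R M) :
    secRad (N.map f) = (secRad N).map f := by
  have hmi := Submodule.map_injective_of_injective (f := f) hf
  have hset : {S : Submodule R M' | IsSecond S ∧ S ≤ N.map f}
      = Submodule.map f '' {S : Submodule R M | IsSecond S ∧ S ≤ N} := by
    ext S'
    constructor
    · rintro ⟨⟨hne, hsec⟩, hle⟩
      have hrange : S' ≤ LinearMap.range f :=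
        hle.trans (by rintro x ⟨y, _, rfl⟩; exact ⟨y, rfl⟩)
      have hmc : Submodule.map f (S'.comap f) = S' := Submodule.map_comap_eq_self hrange
      refine ⟨S'.comap f, ⟨⟨?_, ?_⟩, ?_⟩, hmc⟩
      · intro h; apply hne; rw [← hmc, h, Submodule.map_bot]
      · intro a
        rcases hsec a with h | h
        · left; apply hmi
          rw [Submodule.map_pointwise_smul, hmc, h]
        · right; apply hmi
          rw [Submodule.map_pointwise_smul, hmc, h, Submodule.map_bot]
      · rw [← Submodule.comap_map_eq_of_injective hf N]
        exact Submodule.comap_mono hle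
    · rintro ⟨T, ⟨⟨hne, hsec⟩, hle⟩, rfl⟩
      refine ⟨⟨?_, ?_⟩, Submodule.map_mono hle⟩
      · intro h; apply hne; apply hmi; rw [h, Submodule.map_bot]
      · intro a
        rcases hsec a with h | h
        · left; rw [← Submodule.map_pointwise_smul, h]
        · right; rw [← Submodule.map_pointwise_smul, h, Submodule.map_bot]
  rw [secRad, secRad, hset, sSup_image]
  exact ((Submodule.gc_map_comap f).l_sSup).symm
end

section
/- Let $f : M \to M'$ be an injective homomorphism of $R$-modules and $N'$ a submodule of $M'$ with $N' \subseteq f(M)$. Then $\mathrm{sec}(f^{-1}(N')) = f^{-1}(\mathrm{sec}(N'))$. -/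
open Pointwise

variable {R : Type*} [CommRing R] {M : Type*} [AddCommGroup M] [Module R M]

theorem stmt14 {M' : Type*} [AddCommGroup M'] [Module R M']
    (f : M →ₗ[R] M') (hf : Function.Injective f) (N' : Submodule R M')
    (hN' : N' ≤ LinearMap.range f) :
    secRad (N'.comap f) = (secRad N').comap f := by
  have hker : LinearMap.ker f = ⊥ := LinearMap.ker_eq_bot.mpr hf
  have hmapinj : Function.Injective (Submodule.map f) :=
    Submodule.map_injective_of_injective hf
  apply le_antisymm
  · apply sSup_le
    rintro S ⟨⟨hS0, hSa⟩, hSN⟩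
    rw [← Submodule.map_le_iff_le_comap] at hSN ⊢
    have hsec : IsSecond (S.map f) := by
      constructor
      · intro h
        exact hS0 (hmapinj (by simpa using h))
      · intro a
        rcases hSa a with h | h
        · left; rw [← Submodule.map_pointwise_smul, h]
        · right; rw [← Submodule.map_pointwise_smul, h, Submodule.map_bot]
    exact le_sSup ⟨hsec, hSN⟩
  · have key : secRad N' ≤ (secRad (N'.comap f)).map f := by
      apply sSup_le
      rintro S' ⟨⟨hS0, hSa⟩, hSN⟩
      have hrange : S' ≤ LinearMap.range f := hSN.trans hN'
      have hmc : (S'.comap f).map f = S' := Submodule.map_comap_eq_self hrange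
      have hsec : IsSecond (S'.comap f) := by
        constructor
        · intro h
          apply hS0
          rw [← hmc, h, Submodule.map_bot]
        · intro a
          rcases hSa a with h | h
          · left
            apply hmapinj
            rw [Submodule.map_pointwise_smul, hmc, h]
          · right
            apply hmapinj
            rw [Submodule.map_pointwise_smul, hmc, h, Submodule.map_bot]
      calc S' = (S'.comap f).map f := hmc.symm
        _ ≤ (secRad (N'.comap f)).map f :=
            Submodule.map_mono (le_sSup ⟨hsec, Submodule.comap_mono hSN⟩)
    calc (secRad N').comap f ≤ ((secRad (N'.comap f)).map f).comap f :=
          Submodule.comap_mono key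
      _ = secRad (N'.comap f) := by
          rw [Submodule.comap_map_eq, hker, sup_bot_eq]
end

section
/- Let $M$ be an $R$-module and $N \subseteq K$ submodules of $M$. Then $N$ is a strongly 2-absorbing secondary submodule of $K$ (viewed as a module) if and only if $N$ is a strongly 2-absorbing secondary submodule of $M$. -/
open Pointwise

variable {R : Type*} [CommRing R] {M : Type*} [AddCommGroup M] [Module R M]

section Aux

variable {R : Type*} [CommRing R] {M : Type*} [AddCommGroup M] [Module R M]

lemma map_inj (K : Submodule R M) : Function.Injective (Submodule.map K.subtype) :=
  Submodule.map_injective_of_injective K.injective_subtype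

lemma map_secRad (N K : Submodule R M) (hNK : N ≤ K) :
    (secRad (N.comap K.subtype)).map K.subtype = secRad N := by
  have hinj := K.injective_subtype
  have hmapN : (N.comap K.subtype).map K.subtype = N := by
    rw [Submodule.map_comap_subtype, inf_eq_right.2 hNK]
  apply le_antisymm
  · rw [Submodule.map_le_iff_le_comap]
    apply sSup_le
    rintro S ⟨⟨hS0, hSsmul⟩, hSle⟩
    rw [← Submodule.map_le_iff_le_comap]
    apply le_sSup
    refine ⟨⟨?_, ?_⟩, ?_⟩
    · intro h
      exact hS0 (map_inj K (by rw [h, Submodule.map_bot]))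
    · intro a
      rcases hSsmul a with h | h
      · left; rw [← Submodule.map_pointwise_smul, h]
      · right; rw [← Submodule.map_pointwise_smul, h, Submodule.map_bot]
    · calc S.map K.subtype ≤ (N.comap K.subtype).map K.subtype :=
            Submodule.map_mono hSle
        _ = N := hmapN
  · apply sSup_le
    rintro S ⟨⟨hS0, hSsmul⟩, hSle⟩
    have hSK : S ≤ K := hSle.trans hNK
    have hmapS : (S.comap K.subtype).map K.subtype = S := by
      rw [Submodule.map_comap_subtype, inf_eq_right.2 hSK]
    calc S = (S.comap K.subtype).map K.subtype := hmapS.symm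
      _ ≤ (secRad (N.comap K.subtype)).map K.subtype := by
        apply Submodule.map_mono
        apply le_sSup
        refine ⟨⟨?_, ?_⟩, ?_⟩
        · intro h
          apply hS0
          rw [← hmapS, h, Submodule.map_bot]
        · intro a
          rcases hSsmul a with h | h
          · left
            apply map_inj K
            rw [Submodule.map_pointwise_smul, hmapS, h]
          · right
            apply map_inj K
            rw [Submodule.map_pointwise_smul, hmapS, h, Submodule.map_bot]
        · intro x hx
          exact hSle hx

end Aux

theorem stmt16 (N K : Submodule R M) (hNK : N ≤ K) :
    IsS2AbsSecondary (N.comap K.subtype) ↔ IsS2AbsSecondary N := by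
  have hinj := K.injective_subtype
  have hmapN : (N.comap K.subtype).map K.subtype = N := by
    rw [Submodule.map_comap_subtype, inf_eq_right.2 hNK]
  have hsec := map_secRad N K hNK
  constructor
  · rintro ⟨h0, h⟩
    refine ⟨?_, ?_⟩
    · intro hb
      exact h0 (by rw [hb, Submodule.comap_bot, Submodule.ker_subtype])
    · intro a b K' hle
      have hle' : (a * b) • N.comap K.subtype ≤ K'.comap K.subtype := by
        rw [← Submodule.map_le_iff_le_comap, Submodule.map_pointwise_smul, hmapN]
        exact hle
      rcases h a b (K'.comap K.subtype) hle' with h1 | h1 | h1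
      · left
        rw [← hsec, ← Submodule.map_pointwise_smul]
        rw [Submodule.map_le_iff_le_comap]
        exact h1
      · right; left
        rw [← hsec, ← Submodule.map_pointwise_smul]
        rw [Submodule.map_le_iff_le_comap]
        exact h1
      · right; right
        rw [← hmapN, ← Submodule.map_pointwise_smul, h1, Submodule.map_bot]
  · rintro ⟨h0, h⟩
    constructor
    · intro hb
      apply h0
      rw [← hmapN, hb, Submodule.map_bot]
    · intro a b H hle
      have hle' : (a * b) • N ≤ H.map K.subtype := by
        rw [← hmapN, ← Submodule.map_pointwise_smul]
        exact Submodule.map_mono hle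
      rcases h a b (H.map K.subtype) hle' with h1 | h1 | h1
      · left
        rw [← hsec, ← Submodule.map_pointwise_smul] at h1
        exact (Submodule.map_le_map_iff_of_injective hinj _ _).mp h1
      · right; left
        rw [← hsec, ← Submodule.map_pointwise_smul] at h1
        exact (Submodule.map_le_map_iff_of_injective hinj _ _).mp h1
      · right; right
        apply map_inj K
        rw [Submodule.map_pointwise_smul, hmapN, h1, Submodule.map_bot]
end

section
/- Let $N$ be a nonzero submodule of a comultiplication $R$-module $M$. Then $N$ is a secondary module if and only if $\mathrm{Ann}_R(N)$ is a primary ideal of $R$. -/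
open Pointwise

variable {R : Type*} [CommRing R] {M : Type*} [AddCommGroup M] [Module R M]

lemma smul_eq_bot_iff_mem_ann (r : R) (N : Submodule R M) :
    r • N = ⊥ ↔ r ∈ N.annihilator := by
  rw [Submodule.mem_annihilator, eq_bot_iff]
  constructor
  · intro h n hn
    exact (Submodule.mem_bot R).1 (h (Submodule.smul_mem_pointwise_smul n r N hn))
  · intro h m hm
    obtain ⟨n, hn, rfl⟩ := hm
    exact (Submodule.mem_bot R).2 (h n hn)

theorem stmt18 (hM : IsComultiplication R M) (N : Submodule R M) (hN : N ≠ ⊥) :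
    IsSecondarySubmodule N ↔ (Submodule.annihilator N).IsPrimary := by
  have hannne : N.annihilator ≠ ⊤ := by
    intro h
    apply hN
    rw [eq_bot_iff]
    intro m hm
    have h1 : (1 : R) ∈ N.annihilator := h ▸ Submodule.mem_top
    simpa using Submodule.mem_annihilator.1 h1 m hm
  rw [Ideal.isPrimary_iff]
  constructor
  · rintro ⟨-, hsec⟩
    refine ⟨hannne, fun {a b} hab => ?_⟩
    rcases hsec b with hb | ⟨t, ht, hbt⟩
    · left
      rw [← smul_eq_bot_iff_mem_ann]
      calc a • N = a • (b • N) := by rw [hb]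
        _ = (a * b) • N := by rw [← mul_smul]
        _ = ⊥ := (smul_eq_bot_iff_mem_ann _ _).2 hab
    · right
      exact ⟨t, (smul_eq_bot_iff_mem_ann _ _).1 hbt⟩
  · rintro hp
    refine ⟨hN, fun r => ?_⟩
    by_cases hr : r ∈ (N.annihilator).radical
    · right
      obtain ⟨n, hn⟩ := hr
      refine ⟨n + 1, Nat.succ_pos n, ?_⟩
      rw [smul_eq_bot_iff_mem_ann, pow_succ']
      exact Ideal.mul_mem_left _ r hn
    · left
      apply le_antisymm
      · rintro m ⟨n, hn, rfl⟩
        exact N.smul_mem r hn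
      · intro m hm
        rw [hM (r • N) m]
        intro s hs
        have hsr : s * r ∈ N.annihilator := by
          rw [Submodule.mem_annihilator]
          intro n hn
          have := Submodule.mem_annihilator.1 hs (r • n)
            (Submodule.smul_mem_pointwise_smul n r N hn)
          rwa [smul_smul] at this
        rcases hp.2 hsr with h | h
        · exact Submodule.mem_annihilator.1 h m hm
        · exact absurd h hr
end
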